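/- Let m ≥ 1, let Q be an invertible symmetric real m×m matrix, let Y = {x ∈ ℝ^m : xᵀQx ≠ 0}, and let F : Y → ℝ be F(x) = ½·log|xᵀQx|. Then DF(x)[x] = 1 for all x ∈ Y, and the cubic expression vanishes identically: for all x ∈ Y and all u,v,w ∈ ℝ^m, D³F(x)[u,v,w] + 2·( D²F(x)[u,v]·DF(x)[w] + D²F(x)[u,w]·DF(x)[v] + D²F(x)[v,w]·DF(x)[u] ) + 4·DF(x)[u]·DF(x)[v]·DF(x)[w] = 0. (This is the analytic characterization of the level sets {x : |xᵀQx| = const} being quadrics, i.e. centro-affine hypersurfaces with vanishing cubic form.) -/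

import Mathlib

open Matrix ContinuousLinearMap

section aux

variable {m : ℕ} (Q : Matrix (Fin m) (Fin m) ℝ)

noncomputable def stmt7B : (Fin m → ℝ) →L[ℝ] (Fin m → ℝ) →L[ℝ] ℝ :=
  LinearMap.toContinuousLinearMap
    { toFun := fun x => LinearMap.toContinuousLinearMap
        { toFun := fun y => x ⬝ᵥ Q.mulVec y
          map_add' := fun y z => by simp [Matrix.mulVec_add, dotProduct_add]
          map_smul' := fun c y => by simp [Matrix.mulVec_smul, dotProduct_smul] }
      map_add' := fun x z => by ext y; simp [add_dotProduct]
      map_smul' := fun c x => by ext y; simp [smul_dotProduct] }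

@[simp] lemma stmt7B_apply (x y : Fin m → ℝ) : stmt7B Q x y = x ⬝ᵥ Q.mulVec y := by
  simp [stmt7B]

lemma stmt7B_symm (hQ : Q.IsSymm) (x y : Fin m → ℝ) : stmt7B Q x y = stmt7B Q y x := by
  simp only [stmt7B_apply]
  rw [Matrix.dotProduct_mulVec, ← Matrix.mulVec_transpose, hQ.eq, dotProduct_comm]

lemma stmt7B_flip (hQ : Q.IsSymm) : (stmt7B Q).flip = stmt7B Q := by
  ext x y
  simp [stmt7B_symm Q hQ x y]

lemma stmt7_hq (hQ : Q.IsSymm) (x : Fin m → ℝ) :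
    HasFDerivAt (fun y => stmt7B Q y y) ((2 : ℝ) • stmt7B Q x) x := by
  have h := ((stmt7B Q).hasFDerivAt (x := x)).clm_apply (hasFDerivAt_id x)
  rw [stmt7B_flip Q hQ] at h
  refine h.congr_fderiv ?_
  ext v
  simp [two_smul]

noncomputable def stmt7G : (Fin m → ℝ) → ((Fin m → ℝ) →L[ℝ] ℝ) :=
  fun y => (stmt7B Q y y)⁻¹ • stmt7B Q y

lemma stmt7_hF1 (hQ : Q.IsSymm) (F : (Fin m → ℝ) → ℝ)
    (hF : F = fun y => (1 / 2 : ℝ) * Real.log (stmt7B Q y y))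
    (x : Fin m → ℝ) (hx : stmt7B Q x x ≠ 0) :
    HasFDerivAt F (stmt7G Q x) x := by
  subst hF
  have h := ((stmt7_hq Q hQ x).log hx).const_mul (1 / 2 : ℝ)
  refine h.congr_fderiv ?_
  ext v
  simp [stmt7G]
  ring

noncomputable def stmt7G2 : (Fin m → ℝ) → ((Fin m → ℝ) →L[ℝ] (Fin m → ℝ) →L[ℝ] ℝ) :=
  fun y => (stmt7B Q y y)⁻¹ • stmt7B Q
    + ((-(stmt7B Q y y ^ 2)⁻¹) • ((2 : ℝ) • stmt7B Q y)).smulRight (stmt7B Q y)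

lemma stmt7_hinv (hQ : Q.IsSymm) (x : Fin m → ℝ) (hx : stmt7B Q x x ≠ 0) :
    HasFDerivAt (fun y => (stmt7B Q y y)⁻¹)
      ((-(stmt7B Q x x ^ 2)⁻¹) • ((2 : ℝ) • stmt7B Q x)) x := by
  exact (hasDerivAt_inv hx).comp_hasFDerivAt (f := fun y => stmt7B Q y y) x (stmt7_hq Q hQ x)

lemma stmt7_hG2 (hQ : Q.IsSymm) (x : Fin m → ℝ) (hx : stmt7B Q x x ≠ 0) :
    HasFDerivAt (stmt7G Q) (stmt7G2 Q x) x := by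
  exact (stmt7_hinv Q hQ x hx).smul ((stmt7B Q).hasFDerivAt)

end aux

set_option synthInstance.maxHeartbeats 1000000
set_option maxHeartbeats 2000000

section aux2
variable {m : ℕ} (Q : Matrix (Fin m) (Fin m) ℝ)

lemma stmt7_smulRightL_apply (c : (Fin m → ℝ) →L[ℝ] ℝ) (f : (Fin m → ℝ) →L[ℝ] ℝ) :
    ContinuousLinearMap.smulRightL ℝ (Fin m → ℝ) ((Fin m → ℝ) →L[ℝ] ℝ) c f = c.smulRight f := rfl

lemma stmt7_hG3 (hQ : Q.IsSymm) (x : Fin m → ℝ) (hx : stmt7B Q x x ≠ 0) :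
    ∃ T : (Fin m → ℝ) →L[ℝ] (Fin m → ℝ) →L[ℝ] (Fin m → ℝ) →L[ℝ] ℝ,
      HasFDerivAt (stmt7G2 Q) T x ∧ ∀ u v w : Fin m → ℝ,
        T u v w = -2 * (stmt7B Q x x ^ 2)⁻¹ * (stmt7B Q x u * stmt7B Q v w
          + stmt7B Q x v * stmt7B Q u w + stmt7B Q u v * stmt7B Q x w)
          + 8 * (stmt7B Q x x ^ 3)⁻¹ * (stmt7B Q x u * stmt7B Q x v * stmt7B Q x w) := by
  have hpow := (hasDerivAt_pow 2 (stmt7B Q x x)).inv (pow_ne_zero 2 hx)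
  have hcomp := hpow.comp_hasFDerivAt (f := fun y => stmt7B Q y y) x (stmt7_hq Q hQ x)
  have hs := hcomp.neg
  have hV : HasFDerivAt (fun y => (2 : ℝ) • stmt7B Q y) ((2 : ℝ) • stmt7B Q) x :=
    ((2 : ℝ) • stmt7B Q).hasFDerivAt
  have hc := hs.smul hV
  have hBB := (isBoundedBilinearMap_smulRight (𝕜 := ℝ) (E := Fin m → ℝ)
    (F := (Fin m → ℝ) →L[ℝ] ℝ))
  have hBBd := IsBoundedBilinearMap.hasFDerivAt (𝕜 := ℝ) (E := (Fin m → ℝ) →L[ℝ] ℝ) (F := (Fin m → ℝ) →L[ℝ] ℝ) (G := (Fin m → ℝ) →L[ℝ] (Fin m → ℝ) →L[ℝ] ℝ) hBB (((-(stmt7B Q x x ^ 2)⁻¹) • ((2 : ℝ) • stmt7B Q x),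
    stmt7B Q x) : ((Fin m → ℝ) →L[ℝ] ℝ) × ((Fin m → ℝ) →L[ℝ] ℝ))
  have hprod := hc.prodMk ((stmt7B Q).hasFDerivAt)
  have hp2 := hBBd.comp x hprod
  haveI : IsBoundedSMul ℝ ((Fin m → ℝ) →L[ℝ] (Fin m → ℝ) →L[ℝ] ℝ) :=
    @NormedSpace.toIsBoundedSMul ℝ _ _ _ ContinuousLinearMap.toNormedSpace
  have hp1 := HasFDerivAt.smul (F := (Fin m → ℝ) →L[ℝ] (Fin m → ℝ) →L[ℝ] ℝ) (stmt7_hinv Q hQ x hx) (hasFDerivAt_const (stmt7B Q) x)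
  refine ⟨_, hp1.add hp2, ?_⟩
  intro u v w
  simp only [ContinuousLinearMap.add_apply, ContinuousLinearMap.smul_apply,
    ContinuousLinearMap.smulRight_apply, ContinuousLinearMap.flip_apply,
    ContinuousLinearMap.coe_comp', Function.comp_apply, ContinuousLinearMap.zero_apply,
    stmt7_smulRightL_apply, hBB.deriv_apply, ContinuousLinearMap.prod_apply, smul_eq_mul, smul_zero, ContinuousLinearMap.zero_apply, neg_mul, neg_smul, ContinuousLinearMap.neg_apply,
    pow_one, Nat.cast_ofNat, Pi.neg_apply, Pi.inv_apply]
  have hx' : x ⬝ᵥ Q.mulVec x ≠ 0 := by simpa using hx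
  field_simp
  ring

end aux2

/-- For `Q` an invertible symmetric real `m × m` matrix and
`F(x) = ½·log|xᵀQx|` on `Y = {x : xᵀQx ≠ 0}`, the Euler relation `DF(x)[x] = 1` holds and
the centro-affine cubic form expression vanishes identically (the level sets are quadrics). -/
theorem stmt_7 (m : ℕ) (hm : 1 ≤ m) (Q : Matrix (Fin m) (Fin m) ℝ)
    (hQsymm : Q.IsSymm) (hQdet : Q.det ≠ 0)
    (Y : Set (Fin m → ℝ)) (hYdef : Y = {x | x ⬝ᵥ Q.mulVec x ≠ 0})
    (F : (Fin m → ℝ) → ℝ) (hFdef : ∀ x, F x = (1 / 2) * Real.log |x ⬝ᵥ Q.mulVec x|) :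
    (∀ x ∈ Y, iteratedFDerivWithin ℝ 1 F Y x ![x] = 1)
    ∧ (∀ x ∈ Y, ∀ u v w : Fin m → ℝ,
        iteratedFDerivWithin ℝ 3 F Y x ![u, v, w]
          + 2 * (iteratedFDerivWithin ℝ 2 F Y x ![u, v] * iteratedFDerivWithin ℝ 1 F Y x ![w]
            + iteratedFDerivWithin ℝ 2 F Y x ![u, w] * iteratedFDerivWithin ℝ 1 F Y x ![v]
            + iteratedFDerivWithin ℝ 2 F Y x ![v, w] * iteratedFDerivWithin ℝ 1 F Y x ![u])
          + 4 * (iteratedFDerivWithin ℝ 1 F Y x ![u] * iteratedFDerivWithin ℝ 1 F Y x ![v]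
            * iteratedFDerivWithin ℝ 1 F Y x ![w]) = 0) := by
  have hmem : ∀ x ∈ Y, stmt7B Q x x ≠ 0 := by
    intro x hx; rw [hYdef] at hx; simpa using hx
  have hcont : Continuous fun y : Fin m → ℝ => stmt7B Q y y :=
    continuous_iff_continuousAt.2 fun y => (stmt7_hq Q hQsymm y).differentiableAt.continuousAt
  have hYopen : IsOpen Y := by
    rw [hYdef]
    have hset : {x : Fin m → ℝ | x ⬝ᵥ Q.mulVec x ≠ 0}
        = (fun y : Fin m → ℝ => stmt7B Q y y) ⁻¹' {(0 : ℝ)}ᶜ := by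
      ext y; simp
    rw [hset]
    exact isOpen_compl_singleton.preimage hcont
  have hFeq : F = fun y => (1 / 2 : ℝ) * Real.log (stmt7B Q y y) := by
    funext y
    rw [hFdef, Real.log_abs]
    simp
  have hF1 : ∀ x ∈ Y, HasFDerivAt F (stmt7G Q x) x :=
    fun x hx => stmt7_hF1 Q hQsymm F hFeq x (hmem x hx)
  have hfd1 : Set.EqOn (fderiv ℝ F) (stmt7G Q) Y := fun x hx => (hF1 x hx).fderiv
  have hfd2 : Set.EqOn (fderiv ℝ (fderiv ℝ F)) (stmt7G2 Q) Y := by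
    intro x hx
    have h1 : fderiv ℝ F =ᶠ[nhds x] stmt7G Q :=
      Filter.eventuallyEq_of_mem (hYopen.mem_nhds hx) hfd1
    rw [h1.fderiv_eq]
    exact (stmt7_hG2 Q hQsymm x (hmem x hx)).fderiv
  have e1 : ∀ x ∈ Y, ∀ a : Fin m → ℝ,
      iteratedFDerivWithin ℝ 1 F Y x ![a] = stmt7G Q x a := by
    intro x hx a
    rw [iteratedFDerivWithin_of_isOpen 1 hYopen hx, iteratedFDeriv_one_apply, hfd1 hx]
    rfl
  have e2 : ∀ x ∈ Y, ∀ a b : Fin m → ℝ,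
      iteratedFDerivWithin ℝ 2 F Y x ![a, b] = stmt7G2 Q x a b := by
    intro x hx a b
    rw [iteratedFDerivWithin_of_isOpen 2 hYopen hx, iteratedFDeriv_two_apply, hfd2 hx]
    rfl
  constructor
  · intro x hx
    rw [e1 x hx x]
    simp [stmt7G]
    exact inv_mul_cancel₀ (hmem x hx)
  · intro x hx u v w
    obtain ⟨T, hT, hTval⟩ := stmt7_hG3 Q hQsymm x (hmem x hx)
    have hfd3 : fderiv ℝ (fderiv ℝ (fderiv ℝ F)) x = T := by
      have h2 : fderiv ℝ (fderiv ℝ F) =ᶠ[nhds x] stmt7G2 Q :=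
        Filter.eventuallyEq_of_mem (hYopen.mem_nhds hx) hfd2
      rw [h2.fderiv_eq]
      exact hT.fderiv
    have e3 : iteratedFDerivWithin ℝ 3 F Y x ![u, v, w] = T u v w := by
      rw [iteratedFDerivWithin_of_isOpen 3 hYopen hx, iteratedFDeriv_succ_apply_right,
        iteratedFDeriv_two_apply]
      have h0 : Fin.init ![u, v, w] 0 = u := rfl
      have h1 : Fin.init ![u, v, w] 1 = v := rfl
      have hl : ![u, v, w] (Fin.last 2) = w := rfl
      rw [h0, h1, hl, hfd3]
    rw [e3, e2 x hx u v, e2 x hx u w, e2 x hx v w, e1 x hx u, e1 x hx v, e1 x hx w,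
      hTval u v w]
    have hx' : x ⬝ᵥ Q.mulVec x ≠ 0 := by simpa using hmem x hx
    simp only [stmt7G, stmt7G2, ContinuousLinearMap.add_apply, ContinuousLinearMap.smul_apply,
      ContinuousLinearMap.smulRight_apply, smul_eq_mul, stmt7B_apply, neg_smul,
      ContinuousLinearMap.neg_apply]
    field_simp
    ring
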